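/- Let S be a subset of F₂^d that is a dirty nonaffine midset (|S| = 2^{d-1}, S is not an affine hyperplane), and let H₁, H₂ be cleansing hyperplanes for S (affine hyperplanes such that S + H_i is not a midset). If H₁ ∩ S = H₂ ∩ S, then H₁ = H₂. -/

import Mathlib

/-- `S` is an affine subspace of `F₂^d` of dimension `m`. -/
def IsAffineSubspaceOfDim (d m : ℕ) (S : Set (Fin d → ZMod 2)) : Prop :=
  ∃ (p : Fin d → ZMod 2) (W : Submodule (ZMod 2) (Fin d → ZMod 2)),
    Module.finrank (ZMod 2) W = m ∧ S = {x | x - p ∈ W}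

open Module LinearMap

/-- A codimension-one submodule is the kernel of a linear functional. -/
lemma exists_functional_ker {d : ℕ} (hd : 1 ≤ d)
    (W : Submodule (ZMod 2) (Fin d → ZMod 2))
    (hW : Module.finrank (ZMod 2) W = d - 1) :
    ∃ f : (Fin d → ZMod 2) →ₗ[ZMod 2] ZMod 2, LinearMap.ker f = W := by
  have hV : Module.finrank (ZMod 2) (Fin d → ZMod 2) = d := by
    simp [Module.finrank_pi]
  have hq : Module.finrank (ZMod 2) ((Fin d → ZMod 2) ⧸ W) = 1 := by
    have := Submodule.finrank_quotient_add_finrank W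
    rw [hV, hW] at this
    omega
  let b := Module.basisUnique (Fin 1) hq
  refine ⟨(b.coord 0) ∘ₗ W.mkQ, ?_⟩
  ext x
  simp only [LinearMap.mem_ker, LinearMap.comp_apply, Basis.coord_apply]
  rw [Module.basisUnique_repr_eq_zero_iff]
  simp [Submodule.Quotient.mk_eq_zero]

lemma zmod2_iff : ∀ u v a c : ZMod 2, ((u = a ↔ v = c) ↔ u + v = a + c) := by
  decide

theorem cleansing_hyperplane_determined_by_intersection
    (d : ℕ) (hd : 3 ≤ d)
    (S : Set (Fin d → ZMod 2))
    (hmid : S.ncard = 2 ^ (d - 1))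
    (hnonaff : ¬ IsAffineSubspaceOfDim d (d - 1) S)
    (H₁ H₂ : Set (Fin d → ZMod 2))
    (h₁ : IsAffineSubspaceOfDim d (d - 1) H₁)
    (h₂ : IsAffineSubspaceOfDim d (d - 1) H₂)
    (hcap : H₁ ∩ S = H₂ ∩ S)
    (hmeet : (H₁ ∩ H₂).Nonempty)
    (hne : H₁ ≠ H₂) :
    False := by
  have hd1 : 1 ≤ d := by omega
  obtain ⟨p₁, W₁, hW₁, hH₁⟩ := h₁
  obtain ⟨p₂, W₂, hW₂, hH₂⟩ := h₂
  obtain ⟨f₁, hf₁⟩ := exists_functional_ker hd1 W₁ hW₁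
  obtain ⟨f₂, hf₂⟩ := exists_functional_ker hd1 W₂ hW₂
  -- membership in H_i via functionals
  have mem₁ : ∀ x, x ∈ H₁ ↔ f₁ x = f₁ p₁ := by
    intro x
    rw [hH₁]
    simp only [Set.mem_setOf_eq, ← hf₁, LinearMap.mem_ker, map_sub, sub_eq_zero]
  have mem₂ : ∀ x, x ∈ H₂ ↔ f₂ x = f₂ p₂ := by
    intro x
    rw [hH₂]
    simp only [Set.mem_setOf_eq, ← hf₂, LinearMap.mem_ker, map_sub, sub_eq_zero]
  set g : (Fin d → ZMod 2) →ₗ[ZMod 2] ZMod 2 := f₁ + f₂ with hg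
  by_cases hg0 : g = 0
  · -- then f₁ = f₂ (char 2), so H₁, H₂ are level sets of the same functional
    have hff : f₁ = f₂ := by
      refine LinearMap.ext fun x => ?_
      have h0 : g x = 0 := by rw [hg0]; rfl
      have : f₁ x + f₂ x = 0 := h0
      have h2 : ∀ u v : ZMod 2, u + v = 0 → u = v := by decide
      exact h2 _ _ this
    by_cases hab : f₁ p₁ = f₂ p₂
    · exact hne (Set.ext fun x => by rw [mem₁, mem₂, hab, hff])
    · obtain ⟨x, hx₁, hx₂⟩ := hmeet
      rw [mem₁] at hx₁; rw [mem₂] at hx₂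
      exact hab (by rw [← hx₁, hff, hx₂])
  · -- g ≠ 0 : its kernel K is a hyperplane, and S is a coset of K
    have hker : Module.finrank (ZMod 2) (LinearMap.ker g) = d - 1 := by
      have hV : Module.finrank (ZMod 2) (Fin d → ZMod 2) = d := by
        simp [Module.finrank_pi]
      have hrn := g.finrank_range_add_finrank_ker
      rw [hV] at hrn
      have hr1 : Module.finrank (ZMod 2) (LinearMap.range g) = 1 := by
        have hle : Module.finrank (ZMod 2) (LinearMap.range g) ≤ 1 := by
          have := Submodule.finrank_le (LinearMap.range g)
          simpa using this
        have hnb : LinearMap.range g ≠ ⊥ := by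
          rwa [ne_eq, LinearMap.range_eq_bot]
        have hnt : Nontrivial (LinearMap.range g) :=
          Submodule.nontrivial_iff_ne_bot.mpr hnb
        have hpos : 0 < Module.finrank (ZMod 2) (LinearMap.range g) :=
          Module.finrank_pos_iff.mpr hnt
        omega
      omega
    -- find q with g q = f₁ p₁ + f₂ p₂
    obtain ⟨x₀, hx₀⟩ : ∃ x, g x ≠ 0 := by
      by_contra h
      push_neg at h
      exact hg0 (LinearMap.ext fun x => h x)
    obtain ⟨q, hq⟩ : ∃ q, g q = f₁ p₁ + f₂ p₂ :=
      ⟨(f₁ p₁ + f₂ p₂) • x₀, by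
        rw [map_smul, smul_eq_mul]
        have h1 : g x₀ = 1 := by
          revert hx₀; generalize g x₀ = u; revert u; decide
        rw [h1, mul_one]⟩
    set T : Set (Fin d → ZMod 2) := {x | x - q ∈ LinearMap.ker g} with hT
    -- S ⊆ T
    have hST : S ⊆ T := by
      intro s hs
      have hiff : s ∈ H₁ ↔ s ∈ H₂ := by
        constructor
        · intro h; exact (hcap ▸ (Set.mem_inter h hs : s ∈ H₁ ∩ S)).1
        · intro h; exact (hcap.symm ▸ (Set.mem_inter h hs : s ∈ H₂ ∩ S)).1
      rw [mem₁, mem₂] at hiff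
      have : f₁ s + f₂ s = f₁ p₁ + f₂ p₂ := (zmod2_iff _ _ _ _).mp hiff
      simp only [hT, Set.mem_setOf_eq, LinearMap.mem_ker, map_sub, hg,
        LinearMap.add_apply, hq, sub_eq_zero]
      exact this.trans hq.symm
    -- |T| = 2^(d-1)
    have hTcard : T.ncard = 2 ^ (d - 1) := by
      have hbij : T = (fun y => y + q) '' (LinearMap.ker g : Set (Fin d → ZMod 2)) := by
        ext x
        simp only [hT, Set.mem_setOf_eq, Set.mem_image, SetLike.mem_coe]
        constructor
        · intro h; exact ⟨x - q, h, by ring⟩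
        · rintro ⟨y, hy, rfl⟩; simpa using hy
      rw [hbij, Set.ncard_image_of_injective _ (add_left_injective q)]
      haveI : Fintype ↥(LinearMap.ker g) := Fintype.ofFinite _
      have hc : (LinearMap.ker g : Set (Fin d → ZMod 2)).ncard
          = Fintype.card ↥(LinearMap.ker g) := by
        rw [← Nat.card_coe_set_eq]; exact Nat.card_eq_fintype_card
      rw [hc, Module.card_eq_pow_finrank (K := ZMod 2), ZMod.card, hker]
    -- hence S = T, contradicting nonaffineness
    have hfin : T.Finite := Set.toFinite T
    have hSeq : S = T := Set.eq_of_subset_of_ncard_le hST (by rw [hTcard, hmid]) hfin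
    exact hnonaff ⟨q, LinearMap.ker g, hker, hSeq⟩
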